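/- Let a be a random L×N matrix with i.i.d. entries uniform on D_m ⊂ ℤ/(2^m+1)ℤ, N = 2^n, m > n. For index vectors i ≠ k in {1,…,L}^N, P(H_n(a_i) = 0 and H_n(a_k) = 0) ≤ p_{n,m}/M, where p_{n,m} = P(H_n(a_i) = 0) and M = 2^m + 1. -/

import Mathlib

open MeasureTheory

/-- `Dm k = {-2^(k-1), …, 2^(k-1)}`, the symmetric set of representatives of
`ℤ/(2^k+1)ℤ` (for `k ≥ 1`). -/
noncomputable def Dm (k : ℕ) : Finset ℤ := Finset.Icc (-(2 ^ (k - 1) : ℤ)) (2 ^ (k - 1))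

lemma Dm_nonempty (k : ℕ) : (Dm k).Nonempty :=
  ⟨0, Finset.mem_Icc.mpr ⟨neg_nonpos.mpr (by positivity), by positivity⟩⟩

/-- Wagner's tree map `H_i` with modulus `M = 2^m+1`; `none` is the failure state `Δ`.
At each level the two halves are combined, surviving only if the sum modulo `M`
has a representative in `D_{m-i}`. -/
noncomputable def wagner (m : ℕ) : (i : ℕ) → (Fin (2 ^ i) → ℤ) → Option ℤ
  | 0, x => some (x 0)
  | (i + 1), x =>
    match wagner m i (fun k => x ⟨k.1,
          lt_of_lt_of_le k.2 (Nat.pow_le_pow_right (by norm_num) (Nat.le_succ i))⟩),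
        wagner m i (fun k => x ⟨2 ^ i + k.1, by
          have hk := k.2; have h2 : (2:ℕ) ^ (i+1) = 2 ^ i + 2 ^ i := by ring
          omega⟩) with
    | some a, some b =>
        if h : ∃ c ∈ Dm (m - (i + 1)), a + b ≡ c [ZMOD ((2 : ℤ) ^ m + 1)] then some h.choose
        else none
    | _, _ => none

/-- the sample space of vectors of length `2^i` with entries in `Dm m`. -/
noncomputable def vecSpace (m i : ℕ) : Finset (Fin (2 ^ i) → ℤ) :=
  Fintype.piFinset fun _ => Dm m

lemma vecSpace_nonempty (m i : ℕ) : (vecSpace m i).Nonempty :=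
  ⟨fun _ => 0, by
    simp only [vecSpace, Fintype.mem_piFinset]
    intro _
    simp only [Dm, Finset.mem_Icc]
    exact ⟨neg_nonpos.mpr (by positivity), by positivity⟩⟩

/-- `p_{i,m}(j) = P(H_i(x) = j)` for `x` with i.i.d. entries uniform on `Dm m`. -/
noncomputable def pim (m i : ℕ) (j : ℤ) : ℝ :=
  ((vecSpace m i).filter (fun x => wagner m i x = some j)).card / (vecSpace m i).card

/-- the sample space of `L × N` matrices with entries in `Dm m`. -/
noncomputable def matSpace (L m N : ℕ) : Finset (Fin L → Fin N → ℤ) :=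
  Fintype.piFinset fun _ => Fintype.piFinset fun _ => Dm m

lemma matSpace_nonempty (L m N : ℕ) : (matSpace L m N).Nonempty :=
  ⟨fun _ _ => 0, by
    simp only [matSpace, Fintype.mem_piFinset]
    intro _ _
    simp only [Dm, Finset.mem_Icc]
    exact ⟨neg_nonpos.mpr (by positivity), by positivity⟩⟩

/-- `W(A)`: the number of Wagner's solutions. -/
noncomputable def Wcount (L m n : ℕ) (A : Fin L → Fin (2 ^ n) → ℤ) : ℕ :=
  (Finset.univ.filter (fun i : Fin (2 ^ n) → Fin L =>
    wagner m n (fun j => A (i j) j) = some 0)).card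

set_option linter.unusedVariables false


/-- canonical representative of `t` mod `2^m+1` inside `Dm m` -/
def zrep (m : ℕ) (t : ℤ) : ℤ := (t + 2 ^ (m - 1)) % ((2:ℤ) ^ m + 1) - 2 ^ (m - 1)

lemma Mpos (m : ℕ) : (0:ℤ) < 2 ^ m + 1 := by positivity

lemma two_pow_pred (m : ℕ) (hm : 1 ≤ m) : (2:ℤ) ^ (m-1) * 2 = 2 ^ m := by
  rw [← pow_succ]; congr 1; omega

lemma zrep_mem (m : ℕ) (hm : 1 ≤ m) (t : ℤ) : zrep m t ∈ Dm m := by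
  have h1 : (0:ℤ) ≤ (t + 2 ^ (m - 1)) % ((2:ℤ) ^ m + 1) :=
    Int.emod_nonneg _ (by positivity)
  have h2 : (t + 2 ^ (m - 1)) % ((2:ℤ) ^ m + 1) < 2 ^ m + 1 :=
    Int.emod_lt_of_pos _ (Mpos m)
  have h3 := two_pow_pred m hm
  simp only [Dm, zrep, Finset.mem_Icc]
  constructor <;> linarith

lemma zrep_modeq (m : ℕ) (t : ℤ) : zrep m t ≡ t [ZMOD ((2:ℤ) ^ m + 1)] := by
  have : (t + 2 ^ (m - 1)) % ((2:ℤ) ^ m + 1) ≡ t + 2 ^ (m - 1) [ZMOD ((2:ℤ) ^ m + 1)] :=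
    Int.emod_emod_of_dvd _ dvd_rfl
  simpa [zrep] using this.sub_right ((2:ℤ) ^ (m-1))

lemma eq_zrep (m : ℕ) (hm : 1 ≤ m) {c t : ℤ} (hc : c ∈ Dm m)
    (hct : c ≡ t [ZMOD ((2:ℤ) ^ m + 1)]) : c = zrep m t := by
  have hz := zrep_modeq m t
  have hzz := zrep_mem m hm t
  have hdvd : ((2:ℤ) ^ m + 1) ∣ (zrep m t - c) := (hct.trans hz.symm).dvd
  have h3 := two_pow_pred m hm
  simp only [Dm, Finset.mem_Icc] at hc hzz
  have : zrep m t - c = 0 := Int.eq_zero_of_abs_lt_dvd hdvd (by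
    rw [abs_lt]; constructor <;> linarith)
  linarith

lemma card_Dm (m : ℕ) (hm : 1 ≤ m) : (Dm m).card = 2 ^ m + 1 := by
  have h3 := two_pow_pred m hm
  rw [Dm, Int.card_Icc]
  have : (2:ℤ) ^ (m-1) + 1 - (-(2 ^ (m-1))) = ((2 ^ m + 1 : ℕ) : ℤ) := by push_cast; linarith
  rw [this, Int.toNat_natCast]

lemma sum_split (i : ℕ) (x : Fin (2 ^ (i+1)) → ℤ) (x1 x2 : Fin (2 ^ i) → ℤ)
    (h1 : ∀ kk : Fin (2 ^ i), x1 kk = x ⟨kk.1, by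
      have := kk.2; have h2 : (2:ℕ) ^ (i+1) = 2 ^ i + 2 ^ i := (by ring); omega⟩)
    (h2 : ∀ kk : Fin (2 ^ i), x2 kk = x ⟨2 ^ i + kk.1, by
      have := kk.2; have h2 : (2:ℕ) ^ (i+1) = 2 ^ i + 2 ^ i := (by ring); omega⟩) :
    ∑ j, x j = ∑ j, x1 j + ∑ j, x2 j := by
  have hpow : 2 ^ i + 2 ^ i = 2 ^ (i+1) := by ring
  have := Fintype.sum_equiv (finCongr hpow) (fun j => x (finCongr hpow j)) x (fun j => rfl)
  rw [← this, Fin.sum_univ_add]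
  congr 1
  · exact Finset.sum_congr rfl fun kk _ => by rw [h1]; congr 1
  · exact Finset.sum_congr rfl fun kk _ => by rw [h2]; congr 1

lemma wagner_sum (m : ℕ) : ∀ (i : ℕ) (x : Fin (2 ^ i) → ℤ) (v : ℤ),
    wagner m i x = some v → (∑ j, x j) ≡ v [ZMOD ((2:ℤ) ^ m + 1)] := by
  intro i
  induction i with
  | zero =>
    intro x v h
    simp only [wagner, Option.some.injEq] at h
    subst h
    simp
  | succ i ih =>
    intro x v h
    rw [wagner] at h
    split at h
    · rename_i a b hw1 hw2
      split at h
      · rename_i hex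
        obtain ⟨hmem, hcong⟩ := hex.choose_spec
        simp only [Option.some.injEq] at h
        subst h
        have key := sum_split i x _ _ (fun kk => rfl) (fun kk => rfl)
        rw [key]
        exact ((ih _ _ hw1).add (ih _ _ hw2)).trans hcong
      · simp at h
    · simp at h

/-- update entry `(r0, j0)` of matrix `A` to `d` -/
def updE {L N : ℕ} (r0 : Fin L) (j0 : Fin N) (A : Fin L → Fin N → ℤ) (d : ℤ) :
    Fin L → Fin N → ℤ :=
  fun r c => if r = r0 ∧ c = j0 then d else A r c

lemma updE_self {L N : ℕ} (r0 : Fin L) (j0 : Fin N) (A : Fin L → Fin N → ℤ) :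
    updE r0 j0 A (A r0 j0) = A := by
  funext r c
  simp only [updE]
  split
  · rename_i h; rw [h.1, h.2]
  · rfl

lemma updE_updE {L N : ℕ} (r0 : Fin L) (j0 : Fin N) (A : Fin L → Fin N → ℤ) (d e : ℤ) :
    updE r0 j0 (updE r0 j0 A d) e = updE r0 j0 A e := by
  funext r c
  simp only [updE]
  split <;> rfl

lemma updE_apply {L N : ℕ} (r0 : Fin L) (j0 : Fin N) (A : Fin L → Fin N → ℤ) (d : ℤ) :
    updE r0 j0 A d r0 j0 = d := by simp [updE]

lemma updE_mem {L m N : ℕ} (r0 : Fin L) (j0 : Fin N) {A : Fin L → Fin N → ℤ} {d : ℤ}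
    (hA : A ∈ matSpace L m N) (hd : d ∈ Dm m) : updE r0 j0 A d ∈ matSpace L m N := by
  simp only [matSpace, Fintype.mem_piFinset] at hA ⊢
  intro r c
  simp only [updE]
  split
  · exact hd
  · exact hA r c

lemma mem_entry {L m N : ℕ} {A : Fin L → Fin N → ℤ} (hA : A ∈ matSpace L m N)
    (r : Fin L) (c : Fin N) : A r c ∈ Dm m := by
  simp only [matSpace, Fintype.mem_piFinset] at hA
  exact hA r c

section ClaimA

variable {L m n : ℕ} (i k : Fin (2 ^ n) → Fin L) (j0 : Fin (2 ^ n))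

/-- the `i`-vector is unaffected by updating entry `(k j0, j0)` when `i j0 ≠ k j0` -/
lemma vec_i_updE (hj0 : i j0 ≠ k j0) (A : Fin L → Fin (2 ^ n) → ℤ) (d : ℤ) :
    (fun j => updE (k j0) j0 A d (i j) j) = (fun j => A (i j) j) := by
  funext j
  simp only [updE]
  rw [if_neg]
  rintro ⟨h1, h2⟩
  exact hj0 (h2 ▸ h1)

lemma vec_k_updE (A : Fin L → Fin (2 ^ n) → ℤ) (d : ℤ) :
    (fun j => updE (k j0) j0 A d (k j) j) = Function.update (fun j => A (k j) j) j0 d := by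
  funext j
  by_cases hj : j = j0
  · subst hj; simp [updE]
  · rw [Function.update_of_ne hj]
    simp only [updE]
    rw [if_neg (by tauto)]

lemma sum_k_updE (A : Fin L → Fin (2 ^ n) → ℤ) (d : ℤ) :
    ∑ j, updE (k j0) j0 A d (k j) j = (∑ j, A (k j) j) - A (k j0) j0 + d := by
  rw [vec_k_updE]
  rw [Finset.sum_update_of_mem (Finset.mem_univ j0)]
  have := Finset.sum_eq_sum_sdiff_singleton_add (Finset.mem_univ j0) (fun j => A (k j) j)
  rw [this]
  ring

open Classical in
lemma claimA (hm : 1 ≤ m) (hj0 : i j0 ≠ k j0) :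
    ((matSpace L m (2 ^ n)).filter (fun A => wagner m n (fun j => A (i j) j) = some 0 ∧
        (∑ j, A (k j) j) ≡ 0 [ZMOD ((2:ℤ) ^ m + 1)])).card * (2 ^ m + 1) =
    ((matSpace L m (2 ^ n)).filter
        (fun A => wagner m n (fun j => A (i j) j) = some 0)).card := by
  rw [← card_Dm m hm, ← Finset.card_product]
  refine Finset.card_nbij' (fun p => updE (k j0) j0 p.1 p.2)
    (fun A => (updE (k j0) j0 A (zrep m (A (k j0) j0 - ∑ j, A (k j) j)), A (k j0) j0))
    ?_ ?_ ?_ ?_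
  · rintro ⟨B, d⟩ hp
    simp only [Finset.mem_coe, Finset.mem_product, Finset.mem_filter] at hp
    obtain ⟨⟨hB, hE1, hE2⟩, hd⟩ := hp
    simp only [Finset.mem_coe, Finset.mem_filter]
    exact ⟨updE_mem _ _ hB hd, by rw [vec_i_updE i k j0 hj0]; exact hE1⟩
  · intro A hA
    simp only [Finset.mem_coe, Finset.mem_filter] at hA
    obtain ⟨hA1, hA2⟩ := hA
    simp only [Finset.mem_coe, Finset.mem_product, Finset.mem_filter]
    refine ⟨⟨updE_mem _ _ hA1 (zrep_mem m hm _), ?_, ?_⟩, mem_entry hA1 _ _⟩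
    · rw [vec_i_updE i k j0 hj0]; exact hA2
    · rw [sum_k_updE]
      have := zrep_modeq m (A (k j0) j0 - ∑ j, A (k j) j)
      have h2 := this.add_left ((∑ j, A (k j) j) - A (k j0) j0)
      simpa using h2
  · rintro ⟨B, d⟩ hp
    simp only [Finset.mem_coe, Finset.mem_product, Finset.mem_filter] at hp
    obtain ⟨⟨hB, hE1, hE2⟩, hd⟩ := hp
    have hsum : ∑ j, updE (k j0) j0 B d (k j) j = (∑ j, B (k j) j) - B (k j0) j0 + d :=
      sum_k_updE k j0 B d
    have hval : updE (k j0) j0 B d (k j0) j0 = d := updE_apply _ _ _ _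
    ext : 1
    · show updE (k j0) j0 (updE (k j0) j0 B d) _ = B
      rw [updE_updE]
      beta_reduce
      rw [hval, hsum]
      have harg : d - ((∑ j, B (k j) j) - B (k j0) j0 + d) =
          B (k j0) j0 - ∑ j, B (k j) j := by ring
      rw [harg]
      have : B (k j0) j0 = zrep m (B (k j0) j0 - ∑ j, B (k j) j) := by
        refine eq_zrep m hm (mem_entry hB _ _) ?_
        have := hE2.symm.sub_left (B (k j0) j0)
        simpa using this
      rw [← this, updE_self]
    · show updE (k j0) j0 B d (k j0) j0 = d
      exact hval
  · intro A hA
    simp only [Finset.mem_coe, Finset.mem_filter] at hA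
    show updE (k j0) j0 (updE (k j0) j0 A _) (A (k j0) j0) = A
    rw [updE_updE, updE_self]

end ClaimA

section ClaimB

variable {L m n : ℕ}

open Classical in
lemma fiber_const (i : Fin (2 ^ n) → Fin L) {x y : Fin (2 ^ n) → ℤ}
    (hx : x ∈ vecSpace m n) (hy : y ∈ vecSpace m n) :
    ((matSpace L m (2 ^ n)).filter (fun A => (fun j => A (i j) j) = x)).card =
    ((matSpace L m (2 ^ n)).filter (fun A => (fun j => A (i j) j) = y)).card := by
  simp only [vecSpace, Fintype.mem_piFinset] at hx hy
  refine Finset.card_nbij' (fun A r c => if r = i c then y c else A r c)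
    (fun B r c => if r = i c then x c else B r c) ?_ ?_ ?_ ?_
  · intro A hA
    simp only [Finset.mem_coe, Finset.mem_filter, matSpace, Fintype.mem_piFinset] at hA ⊢
    refine ⟨fun r c => ?_, funext fun j => by simp⟩
    split
    · exact hy c
    · exact hA.1 r c
  · intro B hB
    simp only [Finset.mem_coe, Finset.mem_filter, matSpace, Fintype.mem_piFinset] at hB ⊢
    refine ⟨fun r c => ?_, funext fun j => by simp⟩
    split
    · exact hx c
    · exact hB.1 r c
  · intro A hA
    simp only [Finset.mem_coe, Finset.mem_filter] at hA
    funext r c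
    by_cases h : r = i c
    · simp only [if_pos h]
      subst h
      exact (congrFun hA.2 c).symm
    · simp only [if_neg h]
  · intro B hB
    simp only [Finset.mem_coe, Finset.mem_filter] at hB
    funext r c
    by_cases h : r = i c
    · simp only [if_pos h]
      subst h
      exact (congrFun hB.2 c).symm
    · simp only [if_neg h]

open Classical in
lemma claimB (i : Fin (2 ^ n) → Fin L) :
    ((matSpace L m (2 ^ n)).filter
        (fun A => wagner m n (fun j => A (i j) j) = some 0)).card * (vecSpace m n).card =
    ((vecSpace m n).filter (fun x => wagner m n x = some 0)).card
      * (matSpace L m (2 ^ n)).card := by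
  have hproj : ∀ A ∈ matSpace L m (2 ^ n), (fun j => A (i j) j) ∈ vecSpace m n := by
    intro A hA
    simp only [vecSpace, Fintype.mem_piFinset]
    exact fun j => mem_entry hA _ _
  obtain ⟨x0, hx0⟩ : (vecSpace m n).Nonempty :=
    ⟨fun _ => 0, by
      simp only [vecSpace, Fintype.mem_piFinset]
      intro _
      simp only [Dm, Finset.mem_Icc]
      exact ⟨neg_nonpos.mpr (by positivity), by positivity⟩⟩
  set C := ((matSpace L m (2 ^ n)).filter (fun A => (fun j => A (i j) j) = x0)).card with hC
  -- total count
  have htot : (matSpace L m (2 ^ n)).card = (vecSpace m n).card * C := by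
    rw [Finset.card_eq_sum_card_fiberwise hproj]
    rw [Finset.sum_congr rfl (fun x hx => fiber_const i hx hx0)]
    simp [Finset.sum_const, mul_comm, ← hC]
  -- filtered count
  have hfil : ((matSpace L m (2 ^ n)).filter
      (fun A => wagner m n (fun j => A (i j) j) = some 0)).card =
      ((vecSpace m n).filter (fun x => wagner m n x = some 0)).card * C := by
    have hproj2 : ∀ A ∈ (matSpace L m (2 ^ n)).filter
        (fun A => wagner m n (fun j => A (i j) j) = some 0),
        (fun j => A (i j) j) ∈ (vecSpace m n).filter (fun x => wagner m n x = some 0) := by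
      intro A hA
      simp only [Finset.mem_filter] at hA ⊢
      exact ⟨hproj A hA.1, hA.2⟩
    rw [Finset.card_eq_sum_card_fiberwise hproj2]
    have hfib : ∀ x ∈ (vecSpace m n).filter (fun x => wagner m n x = some 0),
        (((matSpace L m (2 ^ n)).filter
          (fun A => wagner m n (fun j => A (i j) j) = some 0)).filter
            (fun A => (fun j => A (i j) j) = x)).card = C := by
      intro x hx
      simp only [Finset.mem_filter] at hx
      rw [Finset.filter_filter]
      have : ∀ B : Fin L → Fin (2 ^ n) → ℤ,
          ((wagner m n (fun j => B (i j) j) = some 0) ∧ (fun j => B (i j) j) = x)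
          ↔ ((fun j => B (i j) j) = x) := by
        intro B
        constructor
        · rintro ⟨_, h⟩; exact h
        · intro h; exact ⟨by rw [h]; exact hx.2, h⟩
      rw [Finset.filter_congr (fun B _ => this B)]
      exact fiber_const i hx.1 hx0
    rw [Finset.sum_congr rfl hfib]
    simp [Finset.sum_const, mul_comm, ← hC]
  rw [hfil, htot]
  ring

end ClaimB

/-- For distinct index vectors `i ≠ k`,
`P(H_n(a_i) = 0 and H_n(a_k) = 0) ≤ p_{n,m}/M` with `M = 2^m + 1`. -/
theorem joint_wagner_bound (L m n : ℕ) (hL : 2 ≤ L) (hn : 1 ≤ n) (hmn : n < m)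
    (i k : Fin (2 ^ n) → Fin L) (hik : i ≠ k) :
    (((PMF.uniformOfFinset (matSpace L m (2 ^ n))
          (matSpace_nonempty L m (2 ^ n))).toMeasure)
        {A | wagner m n (fun j => A (i j) j) = some 0 ∧
          wagner m n (fun j => A (k j) j) = some 0}).toReal ≤
      pim m n 0 / ((2:ℝ) ^ m + 1) := by
  classical
  have hm : 1 ≤ m := by omega
  obtain ⟨j0, hj0⟩ : ∃ j0, i j0 ≠ k j0 := Function.ne_iff.mp hik
  set S := matSpace L m (2 ^ n) with hS
  rw [PMF.toMeasure_uniformOfFinset_apply _ _ (Set.to_countable _).measurableSet]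
  rw [← hS]
  rw [show (@Finset.filter _ (· ∈ {A | wagner m n (fun j => A (i j) j) = some 0 ∧
          wagner m n (fun j => A (k j) j) = some 0}) (fun _ => Classical.propDecidable _) S) =
      S.filter (fun A => wagner m n (fun j => A (i j) j) = some 0 ∧
          wagner m n (fun j => A (k j) j) = some 0) from by ext A; simp [Set.mem_setOf_eq]]
  set cJ := (S.filter (fun A => wagner m n (fun j => A (i j) j) = some 0 ∧
      wagner m n (fun j => A (k j) j) = some 0)).card with hcJ
  set c12 := (S.filter (fun A => wagner m n (fun j => A (i j) j) = some 0 ∧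
      (∑ j, A (k j) j) ≡ 0 [ZMOD ((2:ℤ) ^ m + 1)])).card with hc12
  set cE1 := (S.filter (fun A => wagner m n (fun j => A (i j) j) = some 0)).card with hcE1
  set cVf := ((vecSpace m n).filter (fun x => wagner m n x = some 0)).card with hcVf
  set cV := (vecSpace m n).card with hcV
  have hsub : cJ ≤ c12 := by
    apply Finset.card_le_card
    intro A hA
    rw [Finset.mem_filter] at hA ⊢
    exact ⟨hA.1, hA.2.1, wagner_sum m n _ 0 hA.2.2⟩
  have hA' : c12 * (2 ^ m + 1) = cE1 := claimA i k j0 hm hj0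
  have hB' : cE1 * cV = cVf * (S.card) := claimB i
  have hSpos : 0 < (S.card : ℝ) := by
    exact_mod_cast Finset.card_pos.mpr (matSpace_nonempty L m (2 ^ n))
  have hVpos : 0 < (cV : ℝ) := by
    have : (vecSpace m n).Nonempty := ⟨fun _ => 0, by
      simp only [vecSpace, Fintype.mem_piFinset]
      intro _
      simp only [Dm, Finset.mem_Icc]
      exact ⟨neg_nonpos.mpr (by positivity), by positivity⟩⟩
    exact_mod_cast Finset.card_pos.mpr this
  have hMpos : (0:ℝ) < 2 ^ m + 1 := by positivity
  have htoReal : ((cJ : ENNReal) / (S.card : ENNReal)).toReal = (cJ : ℝ) / (S.card : ℝ) := by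
    rw [ENNReal.toReal_div]
    simp
  rw [htoReal]
  have hpim : pim m n 0 = (cVf : ℝ) / (cV : ℝ) := rfl
  rw [hpim]
  have hAr : (c12 : ℝ) * (2 ^ m + 1) = cE1 := by exact_mod_cast hA'
  have hBr : (cE1 : ℝ) * cV = cVf * (S.card : ℝ) := by exact_mod_cast hB'
  calc (cJ : ℝ) / S.card ≤ (c12 : ℝ) / S.card := by
        have : (cJ : ℝ) ≤ (c12 : ℝ) := by exact_mod_cast hsub
        exact div_le_div_of_nonneg_right this hSpos.le
    _ = (cVf : ℝ) / cV / (2 ^ m + 1) := by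
        field_simp
        nlinarith [hAr, hBr]
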